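/- Let K ⊆ ℝⁿ be a convex body and O ∈ ∂K. The function e_K is continuous at O if and only if there exists O' ∈ ∂K with e_K(O) = |OO'|, i.e. some chord of K through O of maximal length has O as an endpoint. -/

import Mathlib

open scoped RealInnerProductSpace
open Metric Filter

/-- Width of `K` in direction `u`: distance between the two supporting
hyperplanes of `K` orthogonal to the unit vector `u`. -/
noncomputable def widthFn {n : ℕ} (K : Set (EuclideanSpace ℝ (Fin n)))
    (u : EuclideanSpace ℝ (Fin n)) : ℝ :=
  sSup ((fun x => ⟪x, u⟫) '' K) - sInf ((fun x => ⟪x, u⟫) '' K)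

/-- Diameter of `K` in direction `u`: maximal length of a chord of `K` parallel to `u`. -/
noncomputable def dirDiam {n : ℕ} (K : Set (EuclideanSpace ℝ (Fin n)))
    (u : EuclideanSpace ℝ (Fin n)) : ℝ :=
  sSup {d : ℝ | ∃ x ∈ K, ∃ y ∈ K, (∃ t : ℝ, x - y = t • u) ∧ d = dist x y}

/-- Projective spherical distance `ρ(u,v) = arccos |⟨u,v⟩|`. -/
noncomputable def rho {n : ℕ} (u v : EuclideanSpace ℝ (Fin n)) : ℝ :=
  Real.arccos |⟪u, v⟫|

/-- `e_K(O)`: maximal length of a chord of `K` cut by a line through `O`. -/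
noncomputable def eFn {n : ℕ} (K : Set (EuclideanSpace ℝ (Fin n)))
    (O : EuclideanSpace ℝ (Fin n)) : ℝ :=
  sSup {d : ℝ | ∃ x ∈ K, ∃ y ∈ K, Collinear ℝ ({O, x, y} : Set (EuclideanSpace ℝ (Fin n))) ∧
    d = dist x y}

/-- `s_K(u)`: maximal distance between a point of `K` in one supporting hyperplane
orthogonal to `u` and a point of `K` in the other. -/
noncomputable def sFn {n : ℕ} (K : Set (EuclideanSpace ℝ (Fin n)))
    (u : EuclideanSpace ℝ (Fin n)) : ℝ :=
  sSup {d : ℝ | ∃ A ∈ K, ∃ B ∈ K,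
    (∀ x ∈ K, ⟪x, u⟫ ≤ ⟪A, u⟫) ∧ (∀ x ∈ K, ⟪B, u⟫ ≤ ⟪x, u⟫) ∧ d = dist A B}

/-- `r_K(u)`: infimum over diametral chords `[AB]` for `u` and pairs of parallel
supporting hyperplanes `H₁ ∋ A`, `H₂ ∋ B` of the distance between `H₁` and `H₂`. -/
noncomputable def rFn {n : ℕ} (K : Set (EuclideanSpace ℝ (Fin n)))
    (u : EuclideanSpace ℝ (Fin n)) : ℝ :=
  sInf {d : ℝ | ∃ A ∈ K, ∃ B ∈ K, (∃ t : ℝ, A - B = t • u) ∧ dist A B = dirDiam K u ∧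
    ∃ v : EuclideanSpace ℝ (Fin n), ‖v‖ = 1 ∧
      (∀ x ∈ K, ⟪x, v⟫ ≤ ⟪A, v⟫) ∧ (∀ x ∈ K, ⟪B, v⟫ ≤ ⟪x, v⟫) ∧ d = ⟪A - B, v⟫}


open Topology

variable {n : ℕ}

/-- The set of chord lengths through `P`. -/
def chordSet (K : Set (EuclideanSpace ℝ (Fin n))) (P : EuclideanSpace ℝ (Fin n)) : Set ℝ :=
  {d : ℝ | ∃ x ∈ K, ∃ y ∈ K, Collinear ℝ ({P, x, y} : Set (EuclideanSpace ℝ (Fin n))) ∧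
    d = dist x y}

lemma collinear_triple_iff (P x y : EuclideanSpace ℝ (Fin n)) :
    Collinear ℝ ({P, x, y} : Set (EuclideanSpace ℝ (Fin n))) ↔
      ∃ a b : ℝ, a ^ 2 + b ^ 2 = 1 ∧ a • (x - P) + b • (y - P) = 0 := by
  constructor
  · intro h
    rw [collinear_iff_of_mem (Set.mem_insert P {x, y})] at h
    obtain ⟨v, hv⟩ := h
    obtain ⟨s, hs⟩ := hv x (by simp)
    obtain ⟨t, ht⟩ := hv y (by simp)
    have hx : x - P = s • v := by rw [hs]; simp [vadd_eq_add]
    have hy : y - P = t • v := by rw [ht]; simp [vadd_eq_add]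
    by_cases h0 : s = 0 ∧ t = 0
    · exact ⟨1, 0, by norm_num, by simp [hx, hy, h0.1, h0.2]⟩
    · have hst : (0:ℝ) < s ^ 2 + t ^ 2 := by
        rcases not_and_or.mp h0 with h' | h' <;> positivity
      set N := Real.sqrt (s ^ 2 + t ^ 2) with hN
      have hN0 : 0 < N := Real.sqrt_pos.mpr hst
      have hN2 : N ^ 2 = s ^ 2 + t ^ 2 := Real.sq_sqrt hst.le
      refine ⟨t / N, -s / N, ?_, ?_⟩
      · field_simp
        linarith [hN2]
      · rw [hx, hy, smul_smul, smul_smul, ← add_smul]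
        have : t / N * s + -s / N * t = 0 := by ring
        rw [this, zero_smul]
  · rintro ⟨a, b, hab, h0⟩
    by_cases ha : a = 0
    · have hb : b ≠ 0 := by
        intro hb; rw [ha, hb] at hab; norm_num at hab
      have hyP : y = P := by
        have h1 : b • (y - P) = 0 := by simpa [ha] using h0
        have h2 : y - P = 0 := (smul_eq_zero.mp h1).resolve_left hb
        have := sub_eq_zero.mp h2; exact this
      rw [collinear_iff_of_mem (Set.mem_insert P {x, y})]
      refine ⟨x - P, ?_⟩
      intro p hp
      simp only [Set.mem_insert_iff, Set.mem_singleton_iff] at hp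
      rcases hp with h | h | h
      · exact ⟨0, by simp [h]⟩
      · exact ⟨1, by simp [h, vadd_eq_add]⟩
      · exact ⟨0, by simp [h, hyP]⟩
    · rw [collinear_iff_of_mem (Set.mem_insert P {x, y})]
      refine ⟨y - P, ?_⟩
      intro p hp
      simp only [Set.mem_insert_iff, Set.mem_singleton_iff] at hp
      have hxP : x - P = (-b / a) • (y - P) := by
        have h1 : a • (x - P) = (-b) • (y - P) := by
          rw [neg_smul]; exact eq_neg_of_add_eq_zero_left h0
        have h2 := congrArg (fun z => a⁻¹ • z) h1
        simpa [smul_smul, inv_mul_cancel₀ ha, div_eq_inv_mul, neg_div] using h2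
      rcases hp with h | h | h
      · exact ⟨0, by simp [h]⟩
      · refine ⟨-b / a, ?_⟩
        rw [h, vadd_eq_add, ← hxP]; abel
      · exact ⟨1, by simp [h, vadd_eq_add]⟩

lemma zero_mem_chordSet {K : Set (EuclideanSpace ℝ (Fin n))} (hK : K.Nonempty)
    (P : EuclideanSpace ℝ (Fin n)) : (0:ℝ) ∈ chordSet K P := by
  obtain ⟨x, hx⟩ := hK
  refine ⟨x, hx, x, hx, ?_, (dist_self x).symm⟩
  have : ({P, x, x} : Set (EuclideanSpace ℝ (Fin n))) = {P, x} := by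
    simp [Set.insert_comm]
  rw [this]
  exact collinear_pair ℝ P x

lemma chordSet_nonempty {K : Set (EuclideanSpace ℝ (Fin n))} (hK : K.Nonempty)
    (P : EuclideanSpace ℝ (Fin n)) : (chordSet K P).Nonempty :=
  ⟨0, zero_mem_chordSet hK P⟩

lemma chordSet_bddAbove {K : Set (EuclideanSpace ℝ (Fin n))} (hKc : IsCompact K)
    (P : EuclideanSpace ℝ (Fin n)) : BddAbove (chordSet K P) := by
  obtain ⟨R, hR⟩ := hKc.isBounded.subset_closedBall 0
  refine ⟨2 * R, ?_⟩
  rintro d ⟨x, hx, y, hy, -, rfl⟩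
  have h1 : dist x 0 ≤ R := mem_closedBall.mp (hR hx)
  have h2 : dist y 0 ≤ R := mem_closedBall.mp (hR hy)
  calc dist x y ≤ dist x 0 + dist 0 y := dist_triangle x 0 y
    _ ≤ 2 * R := by rw [dist_comm 0 y]; linarith

lemma eFn_eq_chordSet (K : Set (EuclideanSpace ℝ (Fin n))) (P : EuclideanSpace ℝ (Fin n)) :
    eFn K P = sSup (chordSet K P) := rfl

lemma le_eFn {K : Set (EuclideanSpace ℝ (Fin n))} (hKc : IsCompact K)
    {P x y : EuclideanSpace ℝ (Fin n)} (hx : x ∈ K) (hy : y ∈ K)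
    (hcol : Collinear ℝ ({P, x, y} : Set (EuclideanSpace ℝ (Fin n)))) :
    dist x y ≤ eFn K P :=
  le_csSup (chordSet_bddAbove hKc P) ⟨x, hx, y, hy, hcol, rfl⟩

lemma eFn_nonneg {K : Set (EuclideanSpace ℝ (Fin n))} (hKc : IsCompact K) (hK : K.Nonempty)
    (P : EuclideanSpace ℝ (Fin n)) : 0 ≤ eFn K P :=
  le_csSup (chordSet_bddAbove hKc P) (zero_mem_chordSet hK P)

lemma eFn_usc {K : Set (EuclideanSpace ℝ (Fin n))} (hKc : IsCompact K) (hK : K.Nonempty)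
    (O : EuclideanSpace ℝ (Fin n)) {ε : ℝ} (hε : 0 < ε) :
    ∀ᶠ P in 𝓝 O, eFn K P < eFn K O + ε := by
  by_contra hcon
  rw [Filter.not_eventually] at hcon
  have key : ∀ k : ℕ, ∃ P, dist P O < 1 / (k + 1) ∧ eFn K O + ε ≤ eFn K P := by
    intro k
    have hpos : (0:ℝ) < 1 / (k + 1) := by positivity
    obtain ⟨P, hP, h2⟩ := Filter.frequently_iff.mp hcon (Metric.ball_mem_nhds O hpos)
    exact ⟨P, mem_ball.mp hP, not_lt.mp h2⟩
  choose P hPd hPe using key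
  have hPO : Tendsto P atTop (𝓝 O) := by
    rw [tendsto_iff_dist_tendsto_zero]
    refine squeeze_zero (fun k => dist_nonneg) (fun k => (hPd k).le) ?_
    exact tendsto_one_div_add_atTop_nhds_zero_nat
  have key2 : ∀ k : ℕ, ∃ x ∈ K, ∃ y ∈ K,
      Collinear ℝ ({P k, x, y} : Set (EuclideanSpace ℝ (Fin n))) ∧
      eFn K O + ε / 2 < dist x y := by
    intro k
    have hlt : eFn K O + ε / 2 < sSup (chordSet K (P k)) := by
      rw [← eFn_eq_chordSet]; linarith [hPe k]
    obtain ⟨d, ⟨x, hx, y, hy, hcol, rfl⟩, hd⟩ :=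
      exists_lt_of_lt_csSup (chordSet_nonempty hK (P k)) hlt
    exact ⟨x, hx, y, hy, hcol, hd⟩
  choose x hx y hy hcol hdist using key2
  have key3 : ∀ k : ℕ, ∃ a b : ℝ, a ^ 2 + b ^ 2 = 1 ∧
      a • (x k - P k) + b • (y k - P k) = 0 :=
    fun k => (collinear_triple_iff _ _ _).mp (hcol k)
  choose a b hab h0 using key3
  obtain ⟨x₀, hx₀K, φ₁, hφ₁, hx₀⟩ := hKc.tendsto_subseq hx
  obtain ⟨y₀, hy₀K, φ₂, hφ₂, hy₀⟩ := hKc.tendsto_subseq (fun k => hy (φ₁ k))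
  have haI : ∀ k, a k ∈ Set.Icc (-1:ℝ) 1 := by
    intro k
    constructor <;> nlinarith [hab k, sq_nonneg (b k), sq_nonneg (a k + 1), sq_nonneg (a k - 1)]
  have hbI : ∀ k, b k ∈ Set.Icc (-1:ℝ) 1 := by
    intro k
    constructor <;> nlinarith [hab k, sq_nonneg (a k), sq_nonneg (b k + 1), sq_nonneg (b k - 1)]
  obtain ⟨a₀, -, φ₃, hφ₃, ha₀⟩ :=
    (isCompact_Icc (a := (-1:ℝ)) (b := 1)).tendsto_subseq (fun k => haI (φ₁ (φ₂ k)))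
  obtain ⟨b₀, -, φ₄, hφ₄, hb₀⟩ :=
    (isCompact_Icc (a := (-1:ℝ)) (b := 1)).tendsto_subseq (fun k => hbI (φ₁ (φ₂ (φ₃ k))))
  set ψ : ℕ → ℕ := fun k => φ₁ (φ₂ (φ₃ (φ₄ k))) with hψ
  have hx' : Tendsto (fun k => x (ψ k)) atTop (𝓝 x₀) :=
    hx₀.comp ((hφ₂.comp (hφ₃.comp hφ₄)).tendsto_atTop)
  have hy' : Tendsto (fun k => y (ψ k)) atTop (𝓝 y₀) :=
    hy₀.comp ((hφ₃.comp hφ₄).tendsto_atTop)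
  have ha' : Tendsto (fun k => a (ψ k)) atTop (𝓝 a₀) :=
    ha₀.comp hφ₄.tendsto_atTop
  have hb' : Tendsto (fun k => b (ψ k)) atTop (𝓝 b₀) := hb₀
  have hP' : Tendsto (fun k => P (ψ k)) atTop (𝓝 O) :=
    hPO.comp ((hφ₁.comp (hφ₂.comp (hφ₃.comp hφ₄))).tendsto_atTop)
  have hcol₀ : a₀ • (x₀ - O) + b₀ • (y₀ - O) = 0 := by
    have h1 : Tendsto (fun k => a (ψ k) • (x (ψ k) - P (ψ k)) + b (ψ k) • (y (ψ k) - P (ψ k)))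
        atTop (𝓝 (a₀ • (x₀ - O) + b₀ • (y₀ - O))) :=
      (ha'.smul (hx'.sub hP')).add (hb'.smul (hy'.sub hP'))
    have h2 : (fun k => a (ψ k) • (x (ψ k) - P (ψ k)) + b (ψ k) • (y (ψ k) - P (ψ k)))
        = fun _ => (0 : EuclideanSpace ℝ (Fin n)) := funext fun k => h0 (ψ k)
    rw [h2] at h1
    exact tendsto_nhds_unique h1 tendsto_const_nhds
  have hab₀ : a₀ ^ 2 + b₀ ^ 2 = 1 := by
    have h1 : Tendsto (fun k => a (ψ k) ^ 2 + b (ψ k) ^ 2) atTop (𝓝 (a₀ ^ 2 + b₀ ^ 2)) :=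
      ((ha'.pow 2).add (hb'.pow 2))
    have h2 : (fun k => a (ψ k) ^ 2 + b (ψ k) ^ 2) = fun _ => (1:ℝ) :=
      funext fun k => hab (ψ k)
    rw [h2] at h1
    exact tendsto_nhds_unique h1 tendsto_const_nhds
  have hd₀ : eFn K O + ε / 2 ≤ dist x₀ y₀ := by
    refine ge_of_tendsto (hx'.dist hy') ?_
    exact Filter.Eventually.of_forall fun k => (hdist (ψ k)).le
  have hcol₀' : Collinear ℝ ({O, x₀, y₀} : Set (EuclideanSpace ℝ (Fin n))) :=
    (collinear_triple_iff _ _ _).mpr ⟨a₀, b₀, hab₀, hcol₀⟩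
  have hle : dist x₀ y₀ ≤ eFn K O := le_eFn hKc hx₀K hy₀K hcol₀'
  linarith

lemma chord_le_of_not_mem {K : Set (EuclideanSpace ℝ (Fin n))} (hKconv : Convex ℝ K)
    {P x y : EuclideanSpace ℝ (Fin n)} (hP : P ∉ K) (hx : x ∈ K) (hy : y ∈ K)
    (hcol : Collinear ℝ ({P, x, y} : Set (EuclideanSpace ℝ (Fin n)))) :
    dist x y ≤ max (dist P x) (dist P y) := by
  rw [collinear_iff_of_mem (Set.mem_insert P {x, y})] at hcol
  obtain ⟨v, hv⟩ := hcol
  obtain ⟨s, hs⟩ := hv x (by simp)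
  obtain ⟨t, ht⟩ := hv y (by simp)
  have hxv : x = s • v + P := by rw [hs]; rfl
  have hyv : y = t • v + P := by rw [ht]; rfl
  have hdxy : dist x y = |s - t| * ‖v‖ := by
    rw [dist_eq_norm]
    have : x - y = (s - t) • v := by rw [hxv, hyv]; module
    rw [this, norm_smul, Real.norm_eq_abs]
  have hdx : dist P x = |s| * ‖v‖ := by
    rw [dist_comm, dist_eq_norm]
    have : x - P = s • v := by rw [hxv]; abel
    rw [this, norm_smul, Real.norm_eq_abs]
  have hdy : dist P y = |t| * ‖v‖ := by
    rw [dist_comm, dist_eq_norm]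
    have : y - P = t • v := by rw [hyv]; abel
    rw [this, norm_smul, Real.norm_eq_abs]
  -- mixed signs give P ∈ K, a contradiction
  have hmix : ∀ s' t' : ℝ, ∀ x' y' : EuclideanSpace ℝ (Fin n), x' ∈ K → y' ∈ K →
      x' = s' • v + P → y' = t' • v + P → s' ≤ 0 → 0 ≤ t' → False := by
    intro s' t' x' y' hx' hy' hxe hye hs0 ht0
    rcases eq_or_lt_of_le (sub_nonneg.mpr (hs0.trans ht0) : (0:ℝ) ≤ t' - s') with heq | hlt
    · have hs'0 : s' = 0 := by nlinarith
      exact hP (by rw [hxe, hs'0, zero_smul, zero_add] at hx'; exact hx')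
    · set A := t' / (t' - s') with hA
      set B := -s' / (t' - s') with hB
      have hA0 : 0 ≤ A := div_nonneg ht0 hlt.le
      have hB0 : 0 ≤ B := div_nonneg (neg_nonneg.mpr hs0) hlt.le
      have hAB : A + B = 1 := by
        rw [hA, hB, ← add_div, div_eq_one_iff_eq hlt.ne']; ring
      have hmem : A • x' + B • y' ∈ K := hKconv hx' hy' hA0 hB0 hAB
      have hcoef : A * s' + B * t' = 0 := by
        rw [hA, hB]; field_simp
        ring
      have hPeq : A • x' + B • y' = P := by
        rw [hxe, hye]
        have : A • (s' • v + P) + B • (t' • v + P) = (A * s' + B * t') • v + (A + B) • P := by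
          module
        rw [this, hcoef, hAB, zero_smul, one_smul, zero_add]
      exact hP (hPeq ▸ hmem)
  rcases le_or_gt s 0 with hs0 | hs0 <;> rcases le_or_gt t 0 with ht0 | ht0
  · -- both ≤ 0
    rw [hdxy, hdx, hdy]
    have : |s - t| ≤ max |s| |t| := by
      rw [abs_of_nonpos hs0, abs_of_nonpos ht0, abs_sub_le_iff]
      constructor
      · linarith [le_max_right (-s) (-t)]
      · linarith [le_max_left (-s) (-t)]
    calc |s - t| * ‖v‖ ≤ max |s| |t| * ‖v‖ :=
          mul_le_mul_of_nonneg_right this (norm_nonneg v)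
      _ = max (|s| * ‖v‖) (|t| * ‖v‖) := max_mul_of_nonneg _ _ (norm_nonneg v)
  · exact (hmix s t x y hx hy hxv hyv hs0 ht0.le).elim
  · exact (hmix t s y x hy hx hyv hxv ht0 hs0.le).elim
  · -- both > 0
    rw [hdxy, hdx, hdy]
    have : |s - t| ≤ max |s| |t| := by
      rw [abs_of_pos hs0, abs_of_pos ht0, abs_sub_le_iff]
      constructor
      · linarith [le_max_left s t]
      · linarith [le_max_right s t]
    calc |s - t| * ‖v‖ ≤ max |s| |t| * ‖v‖ :=
          mul_le_mul_of_nonneg_right this (norm_nonneg v)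
      _ = max (|s| * ‖v‖) (|t| * ‖v‖) := max_mul_of_nonneg _ _ (norm_nonneg v)

lemma eFn_le_of_not_mem {K : Set (EuclideanSpace ℝ (Fin n))} (hKc : IsCompact K)
    (hKconv : Convex ℝ K) (hK : K.Nonempty) {O P : EuclideanSpace ℝ (Fin n)} {M : ℝ}
    (hM : ∀ z ∈ K, dist O z ≤ M) (hP : P ∉ K) :
    eFn K P ≤ M + dist P O := by
  rw [eFn_eq_chordSet]
  refine csSup_le (chordSet_nonempty hK P) ?_
  rintro d ⟨x, hx, y, hy, hcol, rfl⟩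
  have h1 := chord_le_of_not_mem hKconv hP hx hy hcol
  have h2 : dist P x ≤ dist P O + M := by
    calc dist P x ≤ dist P O + dist O x := dist_triangle P O x
      _ ≤ dist P O + M := by linarith [hM x hx]
  have h3 : dist P y ≤ dist P O + M := by
    calc dist P y ≤ dist P O + dist O y := dist_triangle P O y
      _ ≤ dist P O + M := by linarith [hM y hy]
  calc dist x y ≤ max (dist P x) (dist P y) := h1
    _ ≤ M + dist P O := by rw [max_le_iff]; constructor <;> linarith

set_option maxHeartbeats 1600000 in
lemma eFn_lsc {K : Set (EuclideanSpace ℝ (Fin n))} (hKc : IsCompact K) (hKconv : Convex ℝ K)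
    (hKint : (interior K).Nonempty) {O O' : EuclideanSpace ℝ (Fin n)}
    (hOK : O ∈ K) (hO'K : O' ∈ K) (hEO : eFn K O = dist O O') {ε : ℝ} (hε : 0 < ε) :
    ∀ᶠ P in 𝓝 O, eFn K O - ε < eFn K P := by
  have hK : K.Nonempty := ⟨O, hOK⟩
  obtain ⟨c, hc⟩ := hKint
  obtain ⟨r, hr0, hball⟩ : ∃ r > 0, closedBall c r ⊆ K := by
    obtain ⟨r, hr0, hball⟩ := Metric.nhds_basis_closedBall.mem_iff.mp
      (mem_interior_iff_mem_nhds.mp hc)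
    exact ⟨r, hr0, hball⟩
  set m := dist O O' with hm
  by_cases hmε : m ≤ 2 * ε / 3
  · filter_upwards with P
    have h1 : 0 ≤ eFn K P := eFn_nonneg hKc hK P
    rw [hEO]
    linarith
  push_neg at hmε
  set C := dist O' c with hC
  have hC0 : 0 ≤ C := dist_nonneg
  set t := min (1/2 : ℝ) (ε / (3 * (C + 1))) with ht
  have ht0 : 0 < t := lt_min (by norm_num) (by positivity)
  have ht1 : t ≤ 1 := le_trans (min_le_left _ _) (by norm_num)
  have htC : t * C ≤ ε / 3 := by
    have h1 : t ≤ ε / (3 * (C + 1)) := min_le_right _ _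
    have h2 : t * C ≤ (ε / (3 * (C + 1))) * C := mul_le_mul_of_nonneg_right h1 hC0
    have h3 : (ε / (3 * (C + 1))) * C ≤ ε / 3 := by
      rw [div_mul_eq_mul_div, div_le_div_iff₀ (by positivity) (by norm_num)]
      nlinarith
    linarith
  set μ := min (1/2 : ℝ) (ε / (3 * (m + 1))) with hμ
  have hm0 : 0 < m := by linarith
  have hμ0 : 0 < μ := lt_min (by norm_num) (by positivity)
  have hμh : μ ≤ 1/2 := min_le_left _ _
  have hμm : μ ≤ ε / (3 * (m + 1)) := min_le_right _ _
  set Ot := (1 - t) • O' + t • c with hOt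
  have hOtK : Ot ∈ K :=
    hKconv hO'K (hball (mem_closedBall_self hr0.le)) (by linarith) ht0.le (by ring)
  have hdOt : dist Ot O' = t * C := by
    rw [dist_eq_norm]
    have : Ot - O' = t • (c - O') := by rw [hOt]; module
    rw [this, norm_smul, Real.norm_eq_abs, abs_of_pos ht0, ← dist_eq_norm, dist_comm]
  have hOOt : m - t * C ≤ dist O Ot := by
    have h1 : dist O O' ≤ dist O Ot + dist Ot O' := dist_triangle O Ot O'
    rw [hdOt] at h1
    linarith
  set δ := min (μ * t * r) (ε / 3) with hδ
  have hδ0 : 0 < δ := lt_min (by positivity) (by positivity)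
  have hμ1 : (0:ℝ) < 1 - μ := by linarith
  clear_value m C t μ Ot δ
  filter_upwards [Metric.ball_mem_nhds O hδ0] with P hP
  have hPO : dist P O < δ := mem_ball.mp hP
  have hPOn : ‖P - O‖ < δ := by rw [← dist_eq_norm]; exact hPO
  set u := ((1 - μ) / μ) • (P - O) with hu
  have hunorm : ‖u‖ ≤ t * r := by
    rw [hu, norm_smul, Real.norm_eq_abs, abs_of_pos (div_pos hμ1 hμ0)]
    have h1 : ‖P - O‖ ≤ μ * t * r := le_trans hPOn.le (hδ.le.trans (min_le_left _ _))
    have h2 : (1 - μ) / μ * ‖P - O‖ ≤ (1 - μ) / μ * (μ * t * r) :=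
      mul_le_mul_of_nonneg_left h1 (by positivity)
    have h3 : (1 - μ) / μ * (μ * t * r) = (1 - μ) * (t * r) := by
      field_simp
    nlinarith [mul_nonneg ht0.le hr0.le]
  have hOtuK : Ot + u ∈ K := by
    have hcb : c + t⁻¹ • u ∈ closedBall c r := by
      rw [mem_closedBall, dist_eq_norm]
      have : c + t⁻¹ • u - c = t⁻¹ • u := by abel
      rw [this, norm_smul, Real.norm_eq_abs, abs_of_pos (inv_pos.mpr ht0)]
      rw [inv_mul_le_iff₀ ht0]
      linarith [hunorm]
    have heq : Ot + u = (1 - t) • O' + t • (c + t⁻¹ • u) := by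
      rw [hOt]
      have : t • (t⁻¹ • u) = u := by rw [smul_smul, mul_inv_cancel₀ ht0.ne', one_smul]
      rw [smul_add, this]; abel
    rw [heq]
    exact hKconv hO'K (hball hcb) (by linarith) ht0.le (by ring)
  set x := (1 - μ) • P + μ • Ot with hx
  have hxK : x ∈ K := by
    have hμu : μ • u = (1 - μ) • (P - O) := by
      rw [hu, smul_smul]
      congr 1
      field_simp
    have heq : x = (1 - μ) • O + μ • (Ot + u) := by
      rw [hx, smul_add]
      rw [hμu]
      module
    rw [heq]
    exact hKconv hOK hOtuK (by linarith) hμ0.le (by ring)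
  have hcolx : Collinear ℝ ({P, x, Ot} : Set (EuclideanSpace ℝ (Fin n))) := by
    rw [collinear_iff_of_mem (Set.mem_insert P {x, Ot})]
    refine ⟨Ot - P, ?_⟩
    intro p hp
    simp only [Set.mem_insert_iff, Set.mem_singleton_iff] at hp
    rcases hp with h | h | h
    · exact ⟨0, by simp [h]⟩
    · refine ⟨μ, ?_⟩
      rw [h, hx, vadd_eq_add]
      module
    · exact ⟨1, by simp [h, vadd_eq_add]⟩
  have hdx : dist x Ot = (1 - μ) * dist P Ot := by
    rw [dist_eq_norm, dist_eq_norm]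
    have : x - Ot = (1 - μ) • (P - Ot) := by rw [hx]; module
    rw [this, norm_smul, Real.norm_eq_abs, abs_of_pos hμ1]
  have hlow : dist x Ot ≤ eFn K P := le_eFn hKc hxK hOtK hcolx
  have hPOt : m - 2 * ε / 3 < dist P Ot := by
    have h1 : dist O Ot ≤ dist O P + dist P Ot := dist_triangle O P Ot
    rw [dist_comm O P] at h1
    have h2 : dist P O < ε / 3 := lt_of_lt_of_le hPO (hδ.le.trans (min_le_right _ _))
    linarith
  have hmain : m - ε < (1 - μ) * dist P Ot := by
    have h1 : (1 - μ) * (m - 2 * ε / 3) < (1 - μ) * dist P Ot :=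
      mul_lt_mul_of_pos_left hPOt hμ1
    have h2 : m - ε ≤ (1 - μ) * (m - 2 * ε / 3) := by
      have h3 : μ * (m - 2 * ε / 3) ≤ μ * m := by nlinarith
      have h4 : μ * m ≤ ε / 3 := by
        have := mul_le_mul_of_nonneg_right hμm (le_of_lt hm0)
        calc μ * m ≤ ε / (3 * (m + 1)) * m := this
          _ ≤ ε / 3 := by
            rw [div_mul_eq_mul_div, div_le_div_iff₀ (by positivity) (by norm_num)]
            nlinarith
      nlinarith
    linarith
  rw [hEO]
  calc m - ε < (1 - μ) * dist P Ot := hmain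
    _ = dist x Ot := hdx.symm
    _ ≤ eFn K P := hlow

lemma exists_farthest_frontier {K : Set (EuclideanSpace ℝ (Fin n))} (hn : 2 ≤ n)
    (hKc : IsCompact K) (hKint : (interior K).Nonempty) (O : EuclideanSpace ℝ (Fin n)) :
    ∃ z ∈ frontier K, ∀ w ∈ K, dist O w ≤ dist O z := by
  have hK : K.Nonempty := hKint.mono interior_subset
  obtain ⟨z, hzK, hz⟩ := hKc.exists_isMaxOn hK (continuous_const.dist continuous_id).continuousOn
  have hzmax : ∀ w ∈ K, dist O w ≤ dist O z := fun w hw => hz hw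
  refine ⟨z, ⟨subset_closure hzK, ?_⟩, hzmax⟩
  intro hzint
  obtain ⟨ρ, hρ0, hρball⟩ : ∃ ρ > 0, closedBall z ρ ⊆ K := by
    obtain ⟨ρ, hρ0, hball⟩ := Metric.nhds_basis_closedBall.mem_iff.mp
      (mem_interior_iff_mem_nhds.mp hzint)
    exact ⟨ρ, hρ0, hball⟩
  by_cases hzO : z = O
  · -- then K ⊆ {O}, contradicting interior nonempty
    obtain ⟨c, hc⟩ := hKint
    obtain ⟨r, hr0, hrball⟩ : ∃ r > 0, closedBall c r ⊆ K := by
      obtain ⟨r, hr0, hball⟩ := Metric.nhds_basis_closedBall.mem_iff.mp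
        (mem_interior_iff_mem_nhds.mp hc)
      exact ⟨r, hr0, hball⟩
    have i0 : Fin n := ⟨0, by omega⟩
    set e : EuclideanSpace ℝ (Fin n) := EuclideanSpace.single i0 (1:ℝ) with he
    have hen : ‖e‖ = 1 := by
      rw [he, EuclideanSpace.norm_single]; norm_num
    have h1 : c + r • e ∈ K := by
      refine hrball ?_
      rw [mem_closedBall, dist_eq_norm]
      have : c + r • e - c = r • e := by abel
      rw [this, norm_smul, Real.norm_eq_abs, abs_of_pos hr0, hen, mul_one]
    have h2 : c ∈ K := hrball (mem_closedBall_self hr0.le)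
    have h3 : dist O (c + r • e) ≤ 0 := by
      have := hzmax _ h1; rw [hzO] at this; simpa using this
    have h4 : dist O c ≤ 0 := by
      have := hzmax _ h2; rw [hzO] at this; simpa using this
    have h5 : c + r • e = O := by
      have := le_antisymm h3 dist_nonneg
      rwa [dist_comm, dist_eq_zero] at this
    have h6 : c = O := by
      have := le_antisymm h4 dist_nonneg
      rwa [dist_comm, dist_eq_zero] at this
    rw [h6] at h5
    have : r • e = 0 := by
      have := sub_eq_zero.mpr h5
      simpa using this
    rw [smul_eq_zero] at this
    rcases this with h | h
    · exact hr0.ne' h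
    · rw [h] at hen; simp at hen
  · -- move z further away
    have hzO' : 0 < ‖z - O‖ := by
      rw [norm_pos_iff, sub_ne_zero]; exact hzO
    set w := z + (ρ / ‖z - O‖) • (z - O) with hw
    have hwK : w ∈ K := by
      refine hρball ?_
      rw [mem_closedBall, dist_eq_norm]
      have : w - z = (ρ / ‖z - O‖) • (z - O) := by rw [hw]; abel
      rw [this, norm_smul, Real.norm_eq_abs, abs_of_pos (div_pos hρ0 hzO')]
      rw [div_mul_cancel₀ _ hzO'.ne']
    have hwd : dist O w = ‖z - O‖ + ρ := by
      rw [dist_comm, dist_eq_norm]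
      have : w - O = (1 + ρ / ‖z - O‖) • (z - O) := by rw [hw]; module
      rw [this, norm_smul, Real.norm_eq_abs,
        abs_of_pos (by positivity : (0:ℝ) < 1 + ρ / ‖z - O‖)]
      field_simp
    have := hzmax w hwK
    rw [hwd, dist_comm, dist_eq_norm] at this
    have : ρ ≤ 0 := by
      have h := this
      nlinarith [norm_nonneg (z - O)]
    linarith

theorem eFn_continuousAt_boundary_iff {n : ℕ} (hn : 2 ≤ n)
    (K : Set (EuclideanSpace ℝ (Fin n)))
    (hKc : IsCompact K) (hKconv : Convex ℝ K) (hKint : (interior K).Nonempty)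
    (O : EuclideanSpace ℝ (Fin n)) (hO : O ∈ frontier K) :
    ContinuousAt (eFn K) O ↔ ∃ O' ∈ frontier K, eFn K O = dist O O' := by
  have hK : K.Nonempty := hKint.mono interior_subset
  have hKclosed : IsClosed K := hKc.isClosed
  have hOK : O ∈ K := by
    rw [← hKclosed.closure_eq]; exact hO.1
  constructor
  · intro hcont
    by_contra hno
    push_neg at hno
    obtain ⟨z, hzf, hzmax⟩ := exists_farthest_frontier hn hKc hKint O
    set M := dist O z with hM
    have hEgeM : M ≤ eFn K O := by
      have hzK : z ∈ K := by rw [← hKclosed.closure_eq]; exact hzf.1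
      have hcol : Collinear ℝ ({O, O, z} : Set (EuclideanSpace ℝ (Fin n))) := by
        have : ({O, O, z} : Set (EuclideanSpace ℝ (Fin n))) = {O, z} := by simp
        rw [this]; exact collinear_pair ℝ O z
      exact le_eFn hKc hOK hzK hcol
    have hEneM : eFn K O ≠ M := hno z hzf
    have hEgtM : M < eFn K O := lt_of_le_of_ne hEgeM (Ne.symm hEneM)
    set ε := (eFn K O - M) / 2 with hε
    have hε0 : 0 < ε := by rw [hε]; linarith
    have hev1 : ∀ᶠ P in 𝓝 O, dist (eFn K P) (eFn K O) < ε :=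
      Metric.tendsto_nhds.mp hcont ε hε0
    have hev2 : ∀ᶠ P in 𝓝 O, dist P O < ε := by
      filter_upwards [Metric.ball_mem_nhds O hε0] with P hP
      exact mem_ball.mp hP
    have hfreq : ∃ᶠ P in 𝓝 O, P ∉ K := by
      rw [← Filter.not_eventually]
      intro hev
      exact hO.2 (mem_interior_iff_mem_nhds.mpr hev)
    obtain ⟨P, hPnK, hP1, hP2⟩ := (hfreq.and_eventually (hev1.and hev2)).exists
    have hle : eFn K P ≤ M + dist P O := eFn_le_of_not_mem hKc hKconv hK hzmax hPnK
    have hgt : eFn K O - ε < eFn K P := by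
      rw [Real.dist_eq, abs_lt] at hP1
      linarith [hP1.1]
    rw [hε] at hgt
    linarith
  · rintro ⟨O', hO'f, hEO⟩
    have hO'K : O' ∈ K := by rw [← hKclosed.closure_eq]; exact hO'f.1
    have : Tendsto (eFn K) (𝓝 O) (𝓝 (eFn K O)) := by
      rw [tendsto_order]
      constructor
      · intro a ha
        have hε : 0 < eFn K O - a := by linarith
        filter_upwards [eFn_lsc hKc hKconv hKint hOK hO'K hEO hε] with P hP
        linarith
      · intro a ha
        have hε : 0 < a - eFn K O := by linarith
        filter_upwards [eFn_usc hKc hK O hε] with P hP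
        linarith
    exact this
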